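/- Let f be a monic real polynomial of degree n ≥ 2 all of whose complex roots have nonnegative real part, let r be a real root of f, and let g be the (monic, real, degree n−1) quotient polynomial with f(x) = (x − r) g(x). Then the coefficients of g alternate in sign: for every 0 ≤ j ≤ n−1, the number (−1)^{n−1−j} · (coefficient of x^j in g) is nonnegative. -/

import Mathlib

open Polynomial

private lemma altSignMul (p q : Polynomial ℝ) (hp : p ≠ 0) (hq : q ≠ 0)
    (Hp : ∀ j, 0 ≤ (-1:ℝ)^(p.natDegree - j) * p.coeff j)
    (Hq : ∀ j, 0 ≤ (-1:ℝ)^(q.natDegree - j) * q.coeff j) (j : ℕ) :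
    0 ≤ (-1:ℝ)^((p*q).natDegree - j) * (p*q).coeff j := by
  rw [Polynomial.natDegree_mul hp hq, Polynomial.coeff_mul, Finset.mul_sum]
  apply Finset.sum_nonneg
  rintro ⟨a,b⟩ hab
  rw [Finset.HasAntidiagonal.mem_antidiagonal] at hab
  by_cases ha : a ≤ p.natDegree
  · by_cases hb : b ≤ q.natDegree
    · have h1 : p.natDegree + q.natDegree - j = (p.natDegree - a) + (q.natDegree - b) := by omega
      rw [h1, pow_add, mul_mul_mul_comm]
      exact mul_nonneg (Hp a) (Hq b)
    · simp [Polynomial.coeff_eq_zero_of_natDegree_lt (lt_of_not_ge hb)]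
  · simp [Polynomial.coeff_eq_zero_of_natDegree_lt (lt_of_not_ge ha)]

private lemma alt_sign : ∀ d (p : Polynomial ℝ), p.Monic → p.natDegree = d →
    (∀ z : ℂ, Polynomial.aeval z p = 0 → 0 ≤ z.re) →
    ∀ j, 0 ≤ (-1:ℝ)^(p.natDegree - j) * p.coeff j := by
  intro d
  induction d using Nat.strong_induction_on with
  | _ d IH =>
    intro p hm hd hroots j
    rcases Nat.eq_zero_or_pos d with h0 | hdpos
    · have hp1 : p = 1 := hm.natDegree_eq_zero.mp (hd.trans h0)
      subst hp1
      rcases j with _ | j <;> simp [Polynomial.coeff_one]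
    -- degree ≥ 1 : find a complex root
    have hpdeg : 0 < (p.map (algebraMap ℝ ℂ)).degree := by
      rw [Polynomial.degree_map_eq_of_injective (algebraMap ℝ ℂ).injective]
      rw [Polynomial.degree_eq_natDegree hm.ne_zero, hd]
      exact_mod_cast hdpos
    obtain ⟨z, hz⟩ := Complex.exists_root hpdeg
    have hzroot : Polynomial.aeval z p = 0 := by
      rwa [Polynomial.aeval_def, ← Polynomial.eval_map]
    have hzre : 0 ≤ z.re := hroots z hzroot
    by_cases him : z.im = 0
    · -- real root case
      have hzr : (z.re : ℂ) = z := by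
        apply Complex.ext <;> simp [him]
      have hre : p.IsRoot z.re := by
        have h1 : Polynomial.aeval ((algebraMap ℝ ℂ) z.re) p = 0 := by
          rwa [show (algebraMap ℝ ℂ) z.re = (z.re : ℂ) from rfl, hzr]
        rw [Polynomial.aeval_algebraMap_apply] at h1
        simp only [Polynomial.coe_aeval_eq_eval] at h1
        exact Complex.ofReal_eq_zero.mp h1
      obtain ⟨q, hq⟩ := (Polynomial.dvd_iff_isRoot.mpr hre)
      have hqm : q.Monic := by
        have h2 := hq ▸ hm
        exact (Polynomial.monic_X_sub_C z.re).of_mul_monic_left h2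
      have hqd : q.natDegree = d - 1 := by
        have h2 := hq ▸ hd
        rw [Polynomial.natDegree_mul (Polynomial.X_sub_C_ne_zero z.re) hqm.ne_zero,
          Polynomial.natDegree_X_sub_C] at h2
        omega
      have hqroots : ∀ w : ℂ, Polynomial.aeval w q = 0 → 0 ≤ w.re := by
        intro w hw
        apply hroots w
        rw [hq, map_mul, hw, mul_zero]
      have IHq := IH (d-1) (by omega) q hqm hqd hqroots
      have hlin : ∀ i, 0 ≤ (-1:ℝ)^((X - C z.re).natDegree - i) * (X - C z.re).coeff i := by
        intro i
        rw [Polynomial.natDegree_X_sub_C]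
        rcases i with _ | _ | i
        · simp [hzre]
        · simp
        · rw [Polynomial.coeff_eq_zero_of_natDegree_lt
            (by rw [Polynomial.natDegree_X_sub_C]; omega)]
          simp
      rw [hq]
      exact altSignMul _ _ (Polynomial.X_sub_C_ne_zero z.re) hqm.ne_zero hlin IHq j
    · -- complex conjugate pair case
      have hconj : Polynomial.aeval ((starRingEnd ℂ) z) p = 0 := by
        rw [Polynomial.aeval_conj, hzroot, map_zero]
      set P := p.map (algebraMap ℝ ℂ) with hP
      have hzP : P.IsRoot z := hz
      have hconjP : P.IsRoot ((starRingEnd ℂ) z) := by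
        rw [Polynomial.IsRoot, Polynomial.eval_map, ← Polynomial.aeval_def]
        exact hconj
      obtain ⟨Q1, hQ1⟩ := Polynomial.dvd_iff_isRoot.mpr hzP
      have hQ1root : Q1.IsRoot ((starRingEnd ℂ) z) := by
        have h2 := hQ1 ▸ hconjP
        rw [Polynomial.IsRoot, Polynomial.eval_mul] at h2
        have hne : Polynomial.eval ((starRingEnd ℂ) z) (X - C z) ≠ 0 := by
          simp only [Polynomial.eval_sub, Polynomial.eval_X, Polynomial.eval_C, sub_ne_zero]
          intro h
          exact him (Complex.conj_eq_iff_im.mp h)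
        exact (mul_eq_zero.mp h2).resolve_left hne
      obtain ⟨Q, hQ⟩ := Polynomial.dvd_iff_isRoot.mpr hQ1root
      set quad : Polynomial ℝ := X^2 - C (2*z.re) * X + C (Complex.normSq z) with hquad
      have hquadmap : quad.map (algebraMap ℝ ℂ) = (X - C z) * (X - C ((starRingEnd ℂ) z)) := by
        have h1 : ((2*z.re : ℝ) : ℂ) = z + (starRingEnd ℂ) z := by
          apply Complex.ext <;> simp <;> ring
        have h2 : ((Complex.normSq z : ℝ) : ℂ) = z * (starRingEnd ℂ) z := by
          rw [Complex.mul_conj]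
      -- expand
        simp only [hquad, Polynomial.map_add, Polynomial.map_sub, Polynomial.map_mul,
          Polynomial.map_pow, Polynomial.map_X, Polynomial.map_C]
        rw [show (algebraMap ℝ ℂ) (2*z.re) = z + (starRingEnd ℂ) z from h1,
          show (algebraMap ℝ ℂ) (Complex.normSq z) = z * (starRingEnd ℂ) z from h2,
          Polynomial.C_add, Polynomial.C_mul]
        ring
      have hquadmonic : quad.Monic := by
        rw [hquad]
        monicity!
      have hquaddeg : quad.natDegree = 2 := by
        rw [hquad]
        compute_degree!
      have hdvd : quad ∣ p := by
        rw [← Polynomial.map_dvd_map (algebraMap ℝ ℂ) (algebraMap ℝ ℂ).injective hquadmonic]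
        rw [hquadmap]
        exact ⟨Q, by rw [← hP, hQ1, hQ, mul_assoc]⟩
      obtain ⟨q, hq⟩ := hdvd
      have hqm : q.Monic := by
        have h2 := hq ▸ hm
        exact hquadmonic.of_mul_monic_left h2
      have hqd : q.natDegree = d - 2 := by
        have h2 := hq ▸ hd
        rw [Polynomial.natDegree_mul hquadmonic.ne_zero hqm.ne_zero, hquaddeg] at h2
        omega
      have hqroots : ∀ w : ℂ, Polynomial.aeval w q = 0 → 0 ≤ w.re := by
        intro w hw
        apply hroots w
        rw [hq, map_mul, hw, mul_zero]
      have IHq := IH (d-2) (by omega) q hqm hqd hqroots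
      have hquadsign : ∀ i, 0 ≤ (-1:ℝ)^(quad.natDegree - i) * quad.coeff i := by
        intro i
        rw [hquaddeg]
        rcases i with _ | _ | _ | i
        · simp [hquad, Complex.normSq_nonneg]
        · simp [hquad, Polynomial.coeff_X_pow, hzre]
        · simp [hquad, Polynomial.coeff_X_pow]
        · rw [Polynomial.coeff_eq_zero_of_natDegree_lt (by rw [hquaddeg]; omega)]
          simp
      rw [hq]
      exact altSignMul _ _ hquadmonic.ne_zero hqm.ne_zero hquadsign IHq j


/-- Let `f` be a monic real polynomial of degree `n ≥ 2` all of whose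
complex roots have nonnegative real part, let `r` be a real root of `f`, and let `g` be
the quotient polynomial with `f = (X - r) * g`. Then the coefficients of `g` alternate in
sign: for every `0 ≤ j ≤ n - 1`, the number `(-1)^(n-1-j) * (coefficient of x^j in g)`
is nonnegative. -/
theorem stmt3 (f g : Polynomial ℝ) (n : ℕ) (hn : 2 ≤ n)
    (hmonic : f.Monic) (hdeg : f.natDegree = n)
    (hroots : ∀ z : ℂ, (Polynomial.aeval z) f = 0 → 0 ≤ z.re)
    (r : ℝ) (hr : f.IsRoot r)
    (hfg : f = (Polynomial.X - Polynomial.C r) * g) :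
    ∀ j : ℕ, j ≤ n - 1 → 0 ≤ (-1 : ℝ) ^ (n - 1 - j) * g.coeff j := by
  intro j hj
  have hgm : g.Monic := by
    have h2 := hfg ▸ hmonic
    exact (Polynomial.monic_X_sub_C r).of_mul_monic_left h2
  have hgd : g.natDegree = n - 1 := by
    have h2 := hfg ▸ hdeg
    rw [Polynomial.natDegree_mul (Polynomial.X_sub_C_ne_zero r) hgm.ne_zero,
      Polynomial.natDegree_X_sub_C] at h2
    omega
  have hgroots : ∀ w : ℂ, Polynomial.aeval w g = 0 → 0 ≤ w.re := by
    intro w hw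
    apply hroots w
    rw [hfg, map_mul, hw, mul_zero]
  have := alt_sign (n-1) g hgm hgd hgroots j
  rwa [hgd] at this
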